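/- Let e(x, y) be a real polynomial and S ⊆ ℝ^1 an open interval such that the leading coefficient of e with respect to y vanishes nowhere on S and the discriminant of e with respect to y vanishes nowhere on S. Then the number of distinct real roots of e(x0, y) in y is the same for all x0 ∈ S, and each root varies continuously in x0. -/

import Mathlib

open Polynomial

noncomputable def sylvester {R : Type*} [CommRing R] (m n : ℕ)
    (f g : Polynomial R) : Matrix (Fin (m + n)) (Fin (m + n)) R :=
  Matrix.of fun i j =>
    if (i : ℕ) < n then
      (if (i : ℕ) ≤ (j : ℕ) ∧ (j : ℕ) ≤ (i : ℕ) + m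
        then f.coeff (m + i - j) else 0)
    else
      (if (i : ℕ) - n ≤ (j : ℕ) ∧ (j : ℕ) ≤ ((i : ℕ) - n) + n
        then g.coeff (n + ((i : ℕ) - n) - j) else 0)

noncomputable def resultant {R : Type*} [CommRing R] (m n : ℕ)
    (f g : Polynomial R) : R :=
  (sylvester m n f g).det

noncomputable def polyDisc {R : Type*} [CommRing R] (f : Polynomial R) : R :=
  resultant f.natDegree (f.natDegree - 1) f (Polynomial.derivative f)

lemma sylvester_map {R S : Type*} [CommRing R] [CommRing S] (φ : R →+* S)
    (m n : ℕ) (f g : Polynomial R) :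
    φ.mapMatrix (sylvester m n f g) = sylvester m n (f.map φ) (g.map φ) := by
  ext i j
  simp only [RingHom.mapMatrix_apply, Matrix.map_apply, _root_.sylvester, Matrix.of_apply,
    apply_ite φ, map_zero, coeff_map]

lemma resultant_map {R S : Type*} [CommRing R] [CommRing S] (φ : R →+* S)
    (m n : ℕ) (f g : Polynomial R) :
    φ (resultant m n f g) = resultant m n (f.map φ) (g.map φ) := by
  rw [_root_.resultant, _root_.resultant, RingHom.map_det, sylvester_map]

lemma row_sum {K : Type*} [CommRing K] (N a p : ℕ) (hap : a + p < N)
    (f : Polynomial K) (hf : f.natDegree ≤ p) (y : K) :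
    (∑ j : Fin N, (if a ≤ (j : ℕ) ∧ (j : ℕ) ≤ a + p
        then f.coeff (p + a - (j : ℕ)) else 0) * y ^ (N - 1 - (j : ℕ)))
      = y ^ (N - 1 - (a + p)) * f.eval y := by
  classical
  rw [Fin.sum_univ_eq_sum_range
    (fun j => (if a ≤ j ∧ j ≤ a + p then f.coeff (p + a - j) else 0) * y ^ (N - 1 - j)) N]
  have h1 : ∀ j ∈ Finset.range N,
      (if a ≤ j ∧ j ≤ a + p then f.coeff (p + a - j) else 0) * y ^ (N - 1 - j)
      = if a ≤ j ∧ j ≤ a + p then f.coeff (p + a - j) * y ^ (N - 1 - j) else 0 := by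
    intro j _; split <;> simp
  rw [Finset.sum_congr rfl h1, ← Finset.sum_filter]
  have h2 : Finset.filter (fun j => a ≤ j ∧ j ≤ a + p) (Finset.range N)
      = Finset.Icc a (a + p) := by
    ext j; simp only [Finset.mem_filter, Finset.mem_range, Finset.mem_Icc]; omega
  rw [h2]
  have h3 : ∑ j ∈ Finset.Icc a (a + p), f.coeff (p + a - j) * y ^ (N - 1 - j)
      = ∑ d ∈ Finset.range (p + 1), f.coeff d * (y ^ (N - 1 - (a + p)) * y ^ d) := by
    refine Finset.sum_nbij' (fun j => p + a - j) (fun d => p + a - d) ?_ ?_ ?_ ?_ ?_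
    · intro j hj; simp only [Finset.mem_Icc] at hj; simp only [Finset.mem_range]; omega
    · intro d hd; simp only [Finset.mem_range] at hd; simp only [Finset.mem_Icc]; omega
    · intro j hj; simp only [Finset.mem_Icc] at hj; omega
    · intro d hd; simp only [Finset.mem_range] at hd; omega
    · intro j hj
      simp only [Finset.mem_Icc] at hj
      rw [← pow_add]
      congr 2
      omega
  rw [h3]
  rw [eval_eq_sum_range' (lt_of_le_of_lt hf (Nat.lt_succ_self p)), Finset.mul_sum]
  refine Finset.sum_congr rfl fun d _ => by ring

lemma resultant_eq_zero_of_common_root {K : Type*} [Field K]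
    (m n : ℕ) (hmn : 0 < m + n) (f g : Polynomial K)
    (hf : f.natDegree ≤ m) (hg : g.natDegree ≤ n) (y : K)
    (hfy : f.eval y = 0) (hgy : g.eval y = 0) :
    resultant m n f g = 0 := by
  classical
  rw [_root_.resultant, ← Matrix.exists_mulVec_eq_zero_iff]
  refine ⟨fun j => y ^ (m + n - 1 - (j : ℕ)), ?_, ?_⟩
  · intro h
    have := congrFun h ⟨m + n - 1, by omega⟩
    simp only [Pi.zero_apply] at this
    rw [Nat.sub_self] at this
    simp at this
  · funext i
    simp only [Matrix.mulVec, dotProduct, _root_.sylvester, Matrix.of_apply, Pi.zero_apply]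
    by_cases hi : (i : ℕ) < n
    · simp only [hi, if_true]
      rw [row_sum (m + n) (i : ℕ) m (by omega) f hf y, hfy, mul_zero]
    · simp only [hi, if_false]
      rw [row_sum (m + n) ((i : ℕ) - n) n (by omega) g hg y, hgy, mul_zero]



section Setup
variable (e : Polynomial (Polynomial ℝ))

noncomputable def fpoly (x : ℝ) : Polynomial ℝ := e.map (Polynomial.evalRingHom x)

noncomputable def F (x y : ℝ) : ℝ := (fpoly e x).eval y

lemma F_eq_sum (x y : ℝ) :
    F e x y = ∑ i ∈ Finset.range (e.natDegree + 1), (e.coeff i).eval x * y ^ i := by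
  rw [F, fpoly, eval_map, eval₂_eq_sum_range]
  rfl

lemma F_continuous : Continuous fun p : ℝ × ℝ => F e p.1 p.2 := by
  have : (fun p : ℝ × ℝ => F e p.1 p.2)
      = fun p : ℝ × ℝ => ∑ i ∈ Finset.range (e.natDegree + 1),
          (e.coeff i).eval p.1 * p.2 ^ i := by
    funext p; exact F_eq_sum e p.1 p.2
  rw [this]
  refine continuous_finset_sum _ fun i _ => Continuous.mul ?_ ?_
  · exact ((e.coeff i).continuous).comp continuous_fst
  · exact (continuous_pow i).comp continuous_snd

lemma F_continuous_x (y : ℝ) : Continuous fun x : ℝ => F e x y :=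
  (F_continuous e).comp (continuous_id.prodMk continuous_const)

lemma F_continuous_y (x : ℝ) : Continuous fun y : ℝ => F e x y :=
  (F_continuous e).comp (continuous_const.prodMk continuous_id)

lemma deriv_F (x : ℝ) : deriv (fun y => F e x y) = fun y => F (derivative e) x y := by
  funext y
  show deriv (fun y => (fpoly e x).eval y) y = (fpoly (derivative e) x).eval y
  rw [Polynomial.deriv, fpoly, fpoly, derivative_map]

noncomputable def Rf (x : ℝ) : Finset ℝ := (fpoly e x).roots.toFinset

end Setup

section Facts
variable (e : Polynomial (Polynomial ℝ)) {x : ℝ}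

lemma fpoly_natDegree (hx : e.leadingCoeff.eval x ≠ 0) :
    (fpoly e x).natDegree = e.natDegree :=
  natDegree_map_of_leadingCoeff_ne_zero (evalRingHom x) hx

lemma fpoly_ne_zero (hx : e.leadingCoeff.eval x ≠ 0) : fpoly e x ≠ 0 := by
  have hdeg := fpoly_natDegree e hx
  have : (fpoly e x).leadingCoeff ≠ 0 := by
    rw [leadingCoeff, hdeg, fpoly, coeff_map]
    exact hx
  exact leadingCoeff_ne_zero.mp this

lemma mem_Rf (hx : e.leadingCoeff.eval x ≠ 0) {y : ℝ} :
    y ∈ Rf e x ↔ F e x y = 0 := by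
  rw [Rf, Multiset.mem_toFinset, mem_roots (fpoly_ne_zero e hx)]
  rfl

lemma rootSet_eq (hx : e.leadingCoeff.eval x ≠ 0) :
    {y : ℝ | (fpoly e x).eval y = 0} = ↑(Rf e x) := by
  ext y
  rw [Finset.mem_coe, mem_Rf e hx]
  rfl

end Facts

section Disc
variable (e : Polynomial (Polynomial ℝ)) {x : ℝ}

lemma polyDisc_eval (x : ℝ) :
    (polyDisc e).eval x
      = resultant e.natDegree (e.natDegree - 1) (fpoly e x)
          (derivative (fpoly e x)) := by
  show (evalRingHom x) (polyDisc e) = _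
  rw [polyDisc, resultant_map, fpoly, derivative_map]

lemma no_common_root (hd : (polyDisc e).eval x ≠ 0) (hn : e.natDegree ≠ 0)
    {y : ℝ} (hy : F e x y = 0) : F (derivative e) x y ≠ 0 := by
  intro hgy
  apply hd
  rw [polyDisc_eval]
  refine resultant_eq_zero_of_common_root _ _ (by omega) _ _ ?_ ?_ y hy ?_
  · exact natDegree_map_le
  · have h1 : (derivative (fpoly e x)).natDegree ≤ (fpoly e x).natDegree - 1 :=
      natDegree_derivative_le _
    have h2 : (fpoly e x).natDegree ≤ e.natDegree := natDegree_map_le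
    omega
  · rw [fpoly, derivative_map]
    exact hgy

end Disc

lemma exists_pos_le {α : Type*} [Fintype α] (f : α → ℝ) (hf : ∀ a, 0 < f a) :
    ∃ c, 0 < c ∧ ∀ a, c ≤ f a := by
  cases isEmpty_or_nonempty α with
  | inl h => exact ⟨1, one_pos, fun a => (h.false a).elim⟩
  | inr h =>
    refine ⟨Finset.univ.inf' Finset.univ_nonempty f, ?_,
      fun a => Finset.inf'_le f (Finset.mem_univ a)⟩
    rw [Finset.lt_inf'_iff]
    exact fun a _ => hf a

lemma unique_root (e : Polynomial (Polynomial ℝ)) {x r η : ℝ}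
    (hη : ∀ y, |y - r| < η → F (derivative e) x y ≠ 0)
    {y1 y2 : ℝ} (h1 : |y1 - r| < η) (h2 : |y2 - r| < η)
    (hr1 : F e x y1 = 0) (hr2 : F e x y2 = 0) : y1 = y2 := by
  have key : ∀ a b : ℝ, a < b → |a - r| < η → |b - r| < η →
      F e x a = 0 → F e x b = 0 → False := by
    intro a b hab ha hb hra hrb
    obtain ⟨c, hc, hc0⟩ := exists_deriv_eq_zero hab
      ((F_continuous_y e x).continuousOn) (hra.trans hrb.symm)
    rw [deriv_F] at hc0
    refine hη c ?_ hc0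
    rw [abs_lt] at ha hb ⊢
    exact ⟨by linarith [hc.1], by linarith [hc.2]⟩
  rcases lt_trichotomy y1 y2 with h | h | h
  · exact absurd (key y1 y2 h h1 h2 hr1 hr2) not_false
  · exact h
  · exact absurd (key y2 y1 h h2 h1 hr2 hr1) not_false

lemma sign_change (e : Polynomial (Polynomial ℝ)) (x0 r : ℝ)
    (h0 : F e x0 r = 0) (hd : F (derivative e) x0 r ≠ 0)
    {ε : ℝ} (hε : 0 < ε) :
    ∃ a b : ℝ, r - ε < a ∧ a < r ∧ r < b ∧ b < r + ε ∧ F e x0 a * F e x0 b < 0 := by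
  obtain ⟨q, hq⟩ := dvd_iff_isRoot.mpr (show (fpoly e x0).IsRoot r from h0)
  have hqr : q.eval r ≠ 0 := by
    intro h
    apply hd
    have hder : derivative (fpoly e x0) = q + (X - C r) * derivative q := by
      rw [hq, derivative_mul]; simp
    show (fpoly (derivative e) x0).eval r = 0
    rw [fpoly, ← derivative_map]
    show (derivative (fpoly e x0)).eval r = 0
    rw [hder]
    simp [h]
  obtain ⟨ν0, hν0, hν0p⟩ := Metric.continuousAt_iff.mp (q.continuous.continuousAt (x := r))
    |q.eval r| (abs_pos.mpr hqr)
  set ν := min ν0 ε / 2 with hνdef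
  have hν : 0 < ν := by positivity
  have hmin : 0 < min ν0 ε := lt_min hν0 hε
  have hνν0 : ν < ν0 := by
    have := min_le_left ν0 ε; simp only [hνdef]; linarith
  have hνε : ν < ε := by
    have := min_le_right ν0 ε; simp only [hνdef]; linarith
  have hsame : ∀ y : ℝ, |y - r| ≤ ν → 0 < q.eval y * q.eval r := by
    intro y hy
    have hd : dist y r < ν0 := by rw [Real.dist_eq]; linarith
    have h2 : |q.eval y - q.eval r| < |q.eval r| := by
      have := hν0p hd; rwa [Real.dist_eq] at this
    rcases lt_or_gt_of_ne hqr with hneg | hpos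
    · have h3 := abs_lt.mp h2
      have h4 : |q.eval r| = -(q.eval r) := abs_of_neg hneg
      nlinarith [h3.1, h3.2]
    · have h3 := abs_lt.mp h2
      have h4 : |q.eval r| = q.eval r := abs_of_pos hpos
      nlinarith [h3.1, h3.2]
  refine ⟨r - ν, r + ν, by linarith, by linarith, by linarith, by linarith, ?_⟩
  have hFa : F e x0 (r - ν) = -ν * q.eval (r - ν) := by
    show (fpoly e x0).eval (r - ν) = _
    rw [hq, eval_mul, eval_sub, eval_X, eval_C]; ring
  have hFb : F e x0 (r + ν) = ν * q.eval (r + ν) := by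
    show (fpoly e x0).eval (r + ν) = _
    rw [hq, eval_mul, eval_sub, eval_X, eval_C]; ring
  have hqa : 0 < q.eval (r - ν) * q.eval r := hsame _ (by rw [abs_of_nonpos (by linarith : r - ν - r ≤ 0)]; linarith)
  have hqb : 0 < q.eval (r + ν) * q.eval r := hsame _ (by rw [abs_of_nonneg (by linarith : (0:ℝ) ≤ r + ν - r)]; linarith)
  rw [hFa, hFb]
  have hqr2 : 0 < q.eval r ^ 2 := by positivity
  nlinarith [mul_pos (mul_pos hqa hqb) (mul_pos hν hν), hqr2]

lemma root_bound (e : Polynomial (Polynomial ℝ)) (x0 : ℝ)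
    (hlc0 : e.leadingCoeff.eval x0 ≠ 0) (hn : e.natDegree ≠ 0) :
    ∃ M > 0, ∃ δ > 0, ∀ x, dist x x0 < δ → ∀ y, F e x y = 0 → |y| ≤ M := by
  set n := e.natDegree with hndef
  set c := |e.leadingCoeff.eval x0| / 2 with hcdef
  have hc : 0 < c := by
    have : 0 < |e.leadingCoeff.eval x0| := abs_pos.mpr hlc0
    simp only [hcdef]; linarith
  -- δ1 : leading coeff stays large
  have hopen : IsOpen {x : ℝ | c < |e.leadingCoeff.eval x|} :=
    isOpen_lt continuous_const (e.leadingCoeff.continuous.abs)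
  have hx0mem : x0 ∈ {x : ℝ | c < |e.leadingCoeff.eval x|} := by
    simp only [Set.mem_setOf_eq, hcdef]
    have : 0 < |e.leadingCoeff.eval x0| := abs_pos.mpr hlc0
    linarith
  obtain ⟨δ1, hδ1, hball1⟩ := Metric.isOpen_iff.mp hopen x0 hx0mem
  -- B : coefficient-sum bound on closed ball of radius 1
  have hcont : ContinuousOn (fun x => ∑ i ∈ Finset.range n, |(e.coeff i).eval x|)
      (Metric.closedBall x0 1) :=
    (continuous_finset_sum _ fun i _ => (e.coeff i).continuous.abs).continuousOn
  obtain ⟨B, hB⟩ := (isCompact_closedBall x0 1).exists_bound_of_continuousOn hcont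
  have hBle : ∀ x ∈ Metric.closedBall x0 1,
      ∑ i ∈ Finset.range n, |(e.coeff i).eval x| ≤ B := by
    intro x hx
    calc ∑ i ∈ Finset.range n, |(e.coeff i).eval x|
        ≤ ‖∑ i ∈ Finset.range n, |(e.coeff i).eval x|‖ := le_abs_self _
      _ ≤ B := hB x hx
  refine ⟨max 1 (B / c), lt_of_lt_of_le one_pos (le_max_left _ _), min δ1 1,
    lt_min hδ1 one_pos, fun x hx y hy => ?_⟩
  rcases le_or_gt |y| 1 with h1 | h1
  · exact le_trans h1 (le_max_left _ _)
  -- main case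
  have hlcx : c < |e.leadingCoeff.eval x| :=
    hball1 (Metric.mem_ball.mpr (lt_of_lt_of_le hx (min_le_left _ _)))
  have hxcb : x ∈ Metric.closedBall x0 1 :=
    Metric.mem_closedBall.mpr (le_of_lt (lt_of_lt_of_le hx (min_le_right _ _)))
  have hsum := F_eq_sum e x y
  rw [← hndef] at hsum
  rw [hy] at hsum
  rw [Finset.sum_range_succ] at hsum
  have hmain : (e.coeff n).eval x * y ^ n = -∑ i ∈ Finset.range n, (e.coeff i).eval x * y ^ i := by
    linarith [hsum]
  have habs : |e.leadingCoeff.eval x| * |y| ^ n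
      ≤ ∑ i ∈ Finset.range n, |(e.coeff i).eval x| * |y| ^ i := by
    have h2 : |(e.coeff n).eval x * y ^ n| = |e.leadingCoeff.eval x| * |y| ^ n := by
      rw [abs_mul, abs_pow, coeff_natDegree]
    calc |e.leadingCoeff.eval x| * |y| ^ n = |(e.coeff n).eval x * y ^ n| := h2.symm
      _ = |∑ i ∈ Finset.range n, (e.coeff i).eval x * y ^ i| := by rw [hmain, abs_neg]
      _ ≤ ∑ i ∈ Finset.range n, |(e.coeff i).eval x * y ^ i| := Finset.abs_sum_le_sum_abs _ _
      _ = ∑ i ∈ Finset.range n, |(e.coeff i).eval x| * |y| ^ i := by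
          refine Finset.sum_congr rfl fun i _ => ?_; rw [abs_mul, abs_pow]
  have hstep : ∑ i ∈ Finset.range n, |(e.coeff i).eval x| * |y| ^ i
      ≤ B * |y| ^ (n - 1) := by
    calc ∑ i ∈ Finset.range n, |(e.coeff i).eval x| * |y| ^ i
        ≤ ∑ i ∈ Finset.range n, |(e.coeff i).eval x| * |y| ^ (n - 1) := by
          refine Finset.sum_le_sum fun i hi => ?_
          refine mul_le_mul_of_nonneg_left ?_ (abs_nonneg _)
          exact pow_le_pow_right₀ (le_of_lt h1) (by
            have := Finset.mem_range.mp hi; omega)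
      _ = (∑ i ∈ Finset.range n, |(e.coeff i).eval x|) * |y| ^ (n - 1) := by
          rw [Finset.sum_mul]
      _ ≤ B * |y| ^ (n - 1) := by
          refine mul_le_mul_of_nonneg_right (hBle x hxcb) (by positivity)
  have hpow : |y| ^ n = |y| * |y| ^ (n - 1) := by
    conv_lhs => rw [show n = (n - 1) + 1 by omega]
    rw [pow_succ]; ring
  have hppos : (0:ℝ) < |y| ^ (n - 1) := by positivity
  have hkey : c * |y| * |y| ^ (n - 1) ≤ B * |y| ^ (n - 1) := by
    have h3 : c * |y| * |y| ^ (n - 1) ≤ |e.leadingCoeff.eval x| * |y| ^ n := by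
      rw [hpow]
      have hy0 : (0:ℝ) < |y| := by linarith
      nlinarith [mul_pos hy0 hppos, hlcx]
    linarith [le_trans h3 (le_trans habs hstep)]
  have : c * |y| ≤ B := le_of_mul_le_mul_right (by linarith [hkey]) hppos
  have : |y| ≤ B / c := (le_div_iff₀ hc).mpr (by linarith)
  exact le_trans this (le_max_right _ _)

lemma keyLocal (e : Polynomial (Polynomial ℝ)) (lo hi : ℝ)
    (hlc : ∀ x ∈ Set.Ioo lo hi, e.leadingCoeff.eval x ≠ 0)
    (hdisc : ∀ x ∈ Set.Ioo lo hi, (polyDisc e).eval x ≠ 0)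
    (hn : e.natDegree ≠ 0)
    {x0 : ℝ} (hx0 : x0 ∈ Set.Ioo lo hi) {k : ℕ} (hk : (Rf e x0).card = k)
    {ε : ℝ} (hε : 0 < ε) :
    ∃ δ > 0, Metric.ball x0 δ ⊆ Set.Ioo lo hi ∧
      ∀ x ∈ Metric.ball x0 δ, ∃ ψ : Fin k → ℝ, StrictMono ψ ∧
        (∀ i, F e x (ψ i) = 0) ∧ (∀ y, F e x y = 0 → ∃ i, y = ψ i) ∧
        ∀ i, |ψ i - (Rf e x0).orderEmbOfFin hk i| < ε := by
  classical
  set ρ : Fin k → ℝ := fun i => (Rf e x0).orderEmbOfFin hk i with hρdef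
  have hlcx0 : e.leadingCoeff.eval x0 ≠ 0 := hlc x0 hx0
  have hρmono : StrictMono ρ := ((Rf e x0).orderEmbOfFin hk).strictMono
  have hρroot : ∀ i, F e x0 (ρ i) = 0 := fun i =>
    (mem_Rf e hlcx0).mp (Finset.orderEmbOfFin_mem _ hk i)
  have hroot_eq : ∀ y, F e x0 y = 0 → ∃ i, y = ρ i := by
    intro y hy
    have : y ∈ Rf e x0 := (mem_Rf e hlcx0).mpr hy
    have : y ∈ Set.range ρ := by
      rw [hρdef]
      rw [show Set.range (fun i => (Rf e x0).orderEmbOfFin hk i)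
          = Set.range ((Rf e x0).orderEmbOfFin hk) from rfl,
        Finset.range_orderEmbOfFin]
      exact this
    obtain ⟨i, hi⟩ := this
    exact ⟨i, hi.symm⟩
  -- gap constant
  obtain ⟨g, hg, hgle⟩ : ∃ g, 0 < g ∧ ∀ p : Fin k × Fin k, p.1 < p.2 → g ≤ ρ p.2 - ρ p.1 := by
    obtain ⟨c, hc, hcle⟩ := exists_pos_le
      (fun p : Fin k × Fin k => if h : p.1 < p.2 then ρ p.2 - ρ p.1 else 1)
      (fun p => by
        by_cases h : p.1 < p.2
        · rw [dif_pos h]; exact sub_pos.mpr (hρmono h)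
        · rw [dif_neg h]; exact one_pos)
    refine ⟨c, hc, fun p hp => ?_⟩
    have := hcle p
    rwa [dif_pos hp] at this
  set ε1 := min ε (g / 3) with hε1def
  have hε1 : 0 < ε1 := lt_min hε (by linarith)
  -- per-root neighborhoods where the y-derivative does not vanish
  have hGopen : IsOpen {p : ℝ × ℝ | F (derivative e) p.1 p.2 ≠ 0} := by
    have : {p : ℝ × ℝ | F (derivative e) p.1 p.2 ≠ 0}
        = (fun p : ℝ × ℝ => F (derivative e) p.1 p.2) ⁻¹' {(0:ℝ)}ᶜ := rfl
    rw [this]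
    exact (isOpen_compl_singleton).preimage (F_continuous (derivative e))
  have hper : ∀ i : Fin k, ∃ η, 0 < η ∧ η ≤ ε1 ∧
      ∀ x y, dist x x0 < η → |y - ρ i| < η → F (derivative e) x y ≠ 0 := by
    intro i
    have hmem : (x0, ρ i) ∈ {p : ℝ × ℝ | F (derivative e) p.1 p.2 ≠ 0} :=
      no_common_root e (hdisc x0 hx0) hn (hρroot i)
    obtain ⟨t, ht, hball⟩ := Metric.isOpen_iff.mp hGopen _ hmem
    refine ⟨min (t / 2) ε1, by positivity, min_le_right _ _, fun x y hx hy => ?_⟩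
    have hxt : dist x x0 < t := lt_of_lt_of_le (lt_of_lt_of_le hx (min_le_left _ _)) (by linarith)
    have hyt : dist y (ρ i) < t := by
      rw [Real.dist_eq]
      exact lt_of_lt_of_le (lt_of_lt_of_le hy (min_le_left _ _)) (by linarith)
    have hm : (x, y) ∈ Metric.ball (x0, ρ i) t := by
      rw [Metric.mem_ball, Prod.dist_eq]
      show dist x x0 ⊔ dist y (ρ i) < t
      exact sup_lt_iff.mpr ⟨hxt, hyt⟩
    exact hball hm
  choose η hη0 hηε1 hηG using hper
  obtain ⟨ε2', hε2', hε2'le⟩ := exists_pos_le η hη0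
  set ε3 := min ε2' ε1 with hε3def
  have hε3 : 0 < ε3 := lt_min hε2' hε1
  have hε3ε1 : ε3 ≤ ε1 := min_le_right _ _
  have hε3η : ∀ i, ε3 ≤ η i := fun i => le_trans (min_le_left _ _) (hε2'le i)
  -- per-root existence of nearby roots for nearby x
  have hper2 : ∀ i : Fin k, ∃ d, 0 < d ∧
      ∀ x, dist x x0 < d → ∃ y, |y - ρ i| < ε3 ∧ F e x y = 0 := by
    intro i
    obtain ⟨a, b, ha1, ha2, hb1, hb2, hab⟩ :=
      sign_change e x0 (ρ i) (hρroot i) (no_common_root e (hdisc x0 hx0) hn (hρroot i)) hε3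
    have hopen : IsOpen {x : ℝ | F e x a * F e x b < 0} :=
      isOpen_lt ((F_continuous_x e a).mul (F_continuous_x e b)) continuous_const
    obtain ⟨d, hd, hball⟩ := Metric.isOpen_iff.mp hopen x0 hab
    refine ⟨d, hd, fun x hx => ?_⟩
    have hx' : F e x a * F e x b < 0 := hball (Metric.mem_ball.mpr hx)
    have hab' : a ≤ b := le_of_lt (lt_trans ha2 hb1)
    have hcont : ContinuousOn (fun y => F e x y) (Set.Icc a b) :=
      (F_continuous_y e x).continuousOn
    rcases lt_or_ge (F e x a) 0 with hFa | hFa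
    · have hFb : 0 < F e x b := by nlinarith
      obtain ⟨y, hy, hy0⟩ := intermediate_value_Ioo hab' hcont
        (show (0:ℝ) ∈ Set.Ioo (F e x a) (F e x b) from ⟨hFa, hFb⟩)
      refine ⟨y, ?_, hy0⟩
      rw [abs_lt]; exact ⟨by linarith [hy.1], by linarith [hy.2]⟩
    · have hFa' : 0 < F e x a := by
        rcases lt_or_eq_of_le hFa with h | h
        · exact h
        · exfalso; rw [← h] at hx'; simp at hx'
      have hFb : F e x b < 0 := by nlinarith
      obtain ⟨y, hy, hy0⟩ := intermediate_value_Ioo' hab' hcont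
        (show (0:ℝ) ∈ Set.Ioo (F e x b) (F e x a) from ⟨hFb, hFa'⟩)
      refine ⟨y, ?_, hy0⟩
      rw [abs_lt]; exact ⟨by linarith [hy.1], by linarith [hy.2]⟩
  choose d hd0 hdroot using hper2
  obtain ⟨δ4, hδ4, hδ4le⟩ := exists_pos_le d hd0
  -- root bound
  obtain ⟨M, hM, δM, hδM, hbound⟩ := root_bound e x0 hlcx0 hn
  -- tube lemma for upper semicontinuity
  set K := {y : ℝ | |y| ≤ M ∧ ∀ i, ε3 ≤ |y - ρ i|} with hKdef
  have hKc : IsCompact K := by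
    have hKeq : K = Metric.closedBall 0 M ∩ ⋂ i, {y : ℝ | ε3 ≤ |y - ρ i|} := by
      ext y
      simp only [hKdef, Set.mem_setOf_eq, Set.mem_inter_iff, Metric.mem_closedBall,
        Real.dist_eq, sub_zero, Set.mem_iInter]
    rw [hKeq]
    exact (isCompact_closedBall 0 M).inter_right
      (isClosed_iInter fun i => isClosed_le continuous_const
        ((continuous_id.sub continuous_const).abs))
  have hFopen : IsOpen {p : ℝ × ℝ | F e p.1 p.2 ≠ 0} := by
    have : {p : ℝ × ℝ | F e p.1 p.2 ≠ 0}
        = (fun p : ℝ × ℝ => F e p.1 p.2) ⁻¹' {(0:ℝ)}ᶜ := rfl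
    rw [this]
    exact (isOpen_compl_singleton).preimage (F_continuous e)
  have hsub : ({x0} : Set ℝ) ×ˢ K ⊆ {p : ℝ × ℝ | F e p.1 p.2 ≠ 0} := by
    rintro ⟨x, y⟩ ⟨hx, hy⟩
    simp only [Set.mem_singleton_iff] at hx
    subst hx
    simp only [Set.mem_setOf_eq]
    intro h0
    obtain ⟨i, hi⟩ := hroot_eq y h0
    have := hy.2 i
    rw [hi, sub_self, abs_zero] at this
    linarith
  obtain ⟨u, v, hu, hv, hx0u, hKv, huv⟩ :=
    generalized_tube_lemma isCompact_singleton hKc hFopen hsub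
  obtain ⟨δ5, hδ5, hball5⟩ := Metric.isOpen_iff.mp hu x0 (hx0u rfl)
  -- radius into S
  obtain ⟨δS, hδS, hballS⟩ := Metric.isOpen_iff.mp isOpen_Ioo x0 hx0
  -- final δ
  refine ⟨min (min δ4 δ5) (min δM (min δS ε3)), by positivity, ?_, ?_⟩
  · exact fun x hx => hballS (Metric.mem_ball.mpr
      (lt_of_lt_of_le (Metric.mem_ball.mp hx)
        (le_trans (min_le_right _ _) (le_trans (min_le_right _ _) (min_le_left _ _)))))
  intro x hx
  rw [Metric.mem_ball] at hx
  have hxδ4 : dist x x0 < δ4 :=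
    lt_of_lt_of_le hx (le_trans (min_le_left _ _) (min_le_left _ _))
  have hxδ5 : dist x x0 < δ5 :=
    lt_of_lt_of_le hx (le_trans (min_le_left _ _) (min_le_right _ _))
  have hxδM : dist x x0 < δM :=
    lt_of_lt_of_le hx (le_trans (min_le_right _ _) (min_le_left _ _))
  have hxε3 : dist x x0 < ε3 :=
    lt_of_lt_of_le hx (le_trans (min_le_right _ _) (le_trans (min_le_right _ _) (min_le_right _ _)))
  -- semicontinuity
  have hsemi : ∀ y, F e x y = 0 → ∃ i, |y - ρ i| < ε3 := by
    intro y hy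
    by_contra hcon
    push_neg at hcon
    have hyM : |y| ≤ M := hbound x hxδM y hy
    have hyK : y ∈ K := ⟨hyM, fun i => hcon i⟩
    have : (x, y) ∈ u ×ˢ v := ⟨hball5 (Metric.mem_ball.mpr hxδ5), hKv hyK⟩
    exact huv this hy
  -- uniqueness near each ρ i
  have huniq : ∀ (i : Fin k) (y1 y2 : ℝ), |y1 - ρ i| < ε3 → |y2 - ρ i| < ε3 →
      F e x y1 = 0 → F e x y2 = 0 → y1 = y2 := by
    intro i y1 y2 h1 h2 hr1 hr2
    refine unique_root e (fun y hy => hηG i x y ?_ hy)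
      (lt_of_lt_of_le h1 (hε3η i)) (lt_of_lt_of_le h2 (hε3η i)) hr1 hr2
    exact lt_of_lt_of_le hxε3 (hε3η i)
  -- existence near each ρ i
  have hexist : ∀ i : Fin k, ∃ y, |y - ρ i| < ε3 ∧ F e x y = 0 :=
    fun i => hdroot i x (lt_of_lt_of_le hxδ4 (hδ4le i))
  choose ψ hψnear hψroot using hexist
  have hgap : ∀ i j : Fin k, i < j → ρ i + 3 * ε3 ≤ ρ j := by
    intro i j hij
    have h1 := hgle (i, j) hij
    have h2 : ε3 ≤ g / 3 := le_trans hε3ε1 (min_le_right _ _)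
    simp only at h1
    linarith
  refine ⟨ψ, ?_, hψroot, ?_, ?_⟩
  · intro i j hij
    have h1 := abs_lt.mp (hψnear i)
    have h2 := abs_lt.mp (hψnear j)
    have h3 := hgap i j hij
    linarith [h1.2, h2.1]
  · intro y hy
    obtain ⟨i, hi⟩ := hsemi y hy
    exact ⟨i, huniq i y (ψ i) hi (hψnear i) hy (hψroot i)⟩
  · intro i
    exact lt_of_lt_of_le (hψnear i) (le_trans hε3ε1 (min_le_left _ _))

theorem bivariate_delineability (e : Polynomial (Polynomial ℝ))
    (lo hi : ℝ)
    (hlc : ∀ x0 ∈ Set.Ioo lo hi, e.leadingCoeff.eval x0 ≠ 0)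
    (hdisc : ∀ x0 ∈ Set.Ioo lo hi, (polyDisc e).eval x0 ≠ 0) :
    ∃ (k : ℕ) (θ : Fin k → ℝ → ℝ),
      (∀ i, ContinuousOn (θ i) (Set.Ioo lo hi)) ∧
      (∀ x0 ∈ Set.Ioo lo hi,
        Function.Injective (fun i => θ i x0) ∧
        {y : ℝ | (e.map (Polynomial.evalRingHom x0)).eval y = 0}
          = Set.range fun i => θ i x0) := by
  classical
  by_cases hS : lo < hi
  swap
  · refine ⟨0, fun _ _ => 0, fun i => i.elim0, fun x0 hx0 => ?_⟩
    rw [Set.Ioo_eq_empty hS] at hx0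
    exact absurd hx0 (Set.notMem_empty x0)
  by_cases hn : e.natDegree = 0
  · refine ⟨0, fun _ _ => 0, fun i => i.elim0, fun x0 hx0 => ?_⟩
    refine ⟨fun i => i.elim0, ?_⟩
    have hlcx := hlc x0 hx0
    have hne : fpoly e x0 ≠ 0 := fpoly_ne_zero e hlcx
    have hdeg : (fpoly e x0).natDegree = 0 := by
      have h1 : (fpoly e x0).natDegree ≤ e.natDegree := natDegree_map_le
      omega
    obtain ⟨a, ha⟩ := natDegree_eq_zero.mp hdeg
    have ha0 : a ≠ 0 := by
      intro h; rw [h, map_zero] at ha; exact hne ha.symm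
    have h1 : {y : ℝ | (e.map (Polynomial.evalRingHom x0)).eval y = 0} = ∅ := by
      ext y
      simp only [Set.mem_setOf_eq, Set.mem_empty_iff_false, iff_false]
      show (fpoly e x0).eval y ≠ 0
      rw [← ha, eval_C]
      exact ha0
    rw [h1]
    exact (Set.range_eq_empty _).symm
  -- main case
  set m := (lo + hi) / 2 with hmdef
  have hmid : m ∈ Set.Ioo lo hi := ⟨by simp only [hmdef]; linarith, by simp only [hmdef]; linarith⟩
  set k := (Rf e m).card with hkdef
  -- local constancy of the root count
  have hloc : ∀ x0 ∈ Set.Ioo lo hi, ∃ δ > 0, Metric.ball x0 δ ⊆ Set.Ioo lo hi ∧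
      ∀ x ∈ Metric.ball x0 δ, (Rf e x).card = (Rf e x0).card := by
    intro x0 hx0
    obtain ⟨δ, hδ, hball, hmain⟩ := keyLocal e lo hi hlc hdisc hn hx0 rfl one_pos
    refine ⟨δ, hδ, hball, fun x hx => ?_⟩
    obtain ⟨ψ, hmono, hroots, hcover, _⟩ := hmain x hx
    have hlcx : e.leadingCoeff.eval x ≠ 0 := hlc x (hball hx)
    have hset : Rf e x = Finset.image ψ Finset.univ := by
      ext y
      simp only [Finset.mem_image, Finset.mem_univ, true_and]
      constructor
      · intro hy
        obtain ⟨i, hi⟩ := hcover y ((mem_Rf e hlcx).mp hy)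
        exact ⟨i, hi.symm⟩
      · rintro ⟨i, rfl⟩
        exact (mem_Rf e hlcx).mpr (hroots i)
    rw [hset, Finset.card_image_of_injective _ hmono.injective, Finset.card_univ,
      Fintype.card_fin]
  -- global constancy via preconnectedness
  have hconst : ∀ x ∈ Set.Ioo lo hi, (Rf e x).card = k := by
    set u := {x : ℝ | ∃ δ > 0, Metric.ball x δ ⊆ Set.Ioo lo hi ∧
      ∀ z ∈ Metric.ball x δ, (Rf e z).card = k} with hudef
    set v := {x : ℝ | ∃ δ > 0, Metric.ball x δ ⊆ Set.Ioo lo hi ∧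
      ∀ z ∈ Metric.ball x δ, (Rf e z).card ≠ k} with hvdef
    have hopen : ∀ (P : ℕ → Prop), IsOpen {x : ℝ | ∃ δ > 0, Metric.ball x δ ⊆ Set.Ioo lo hi ∧
        ∀ z ∈ Metric.ball x δ, P (Rf e z).card} := by
      intro P
      rw [Metric.isOpen_iff]
      rintro x ⟨δ, hδ, hsub, hP⟩
      refine ⟨δ, hδ, fun z hz => ?_⟩
      rw [Metric.mem_ball] at hz
      refine ⟨δ - dist z x, by linarith, fun w hw => hsub ?_, fun w hw => hP w ?_⟩ <;>
      · rw [Metric.mem_ball] at hw ⊢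
        calc dist w x ≤ dist w z + dist z x := dist_triangle _ _ _
          _ < δ := by linarith
    have hu : IsOpen u := hopen (fun c => c = k)
    have hv : IsOpen v := hopen (fun c => c ≠ k)
    have hdisj : Disjoint u v := by
      rw [Set.disjoint_left]
      rintro x ⟨δ1, hδ1, _, h1⟩ ⟨δ2, hδ2, _, h2⟩
      exact h2 x (Metric.mem_ball_self hδ2) (h1 x (Metric.mem_ball_self hδ1))
    have hsub : Set.Ioo lo hi ⊆ u ∪ v := by
      intro x hx
      obtain ⟨δ, hδ, hball, hc⟩ := hloc x hx
      by_cases hck : (Rf e x).card = k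
      · exact Or.inl ⟨δ, hδ, hball, fun z hz => (hc z hz).trans hck⟩
      · exact Or.inr ⟨δ, hδ, hball, fun z hz => fun h => hck ((hc z hz).symm.trans h)⟩
    have hne : (Set.Ioo lo hi ∩ u).Nonempty := by
      obtain ⟨δ, hδ, hball, hc⟩ := hloc m hmid
      exact ⟨m, hmid, δ, hδ, hball, fun z hz => hc z hz⟩
    have hmain := isPreconnected_Ioo.subset_left_of_subset_union hu hv hdisj hsub hne
    intro x hx
    obtain ⟨δ, hδ, _, hc⟩ := hmain hx
    exact hc x (Metric.mem_ball_self hδ)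
  -- the root functions
  refine ⟨k, fun i x => if h : (Rf e x).card = k then (Rf e x).orderEmbOfFin h i else 0,
    ?_, ?_⟩
  · -- continuity
    intro i
    intro x0 hx0
    rw [Metric.continuousWithinAt_iff]
    intro ε hε
    obtain ⟨δ, hδ, hball, hmain⟩ := keyLocal e lo hi hlc hdisc hn hx0 (hconst x0 hx0) hε
    refine ⟨δ, hδ, fun x hxS hxd => ?_⟩
    obtain ⟨ψ, hmono, hroots, hcover, hnear⟩ := hmain x (Metric.mem_ball.mpr hxd)
    have hcx : (Rf e x).card = k := hconst x hxS
    have hψeq : ψ = (Rf e x).orderEmbOfFin hcx :=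
      Finset.orderEmbOfFin_unique hcx
        (fun j => (mem_Rf e (hlc x hxS)).mpr (hroots j)) hmono
    simp only [dif_pos hcx, dif_pos (hconst x0 hx0)]
    rw [Real.dist_eq, ← hψeq]
    exact hnear i
  · -- injectivity and range
    intro x0 hx0
    have hcx : (Rf e x0).card = k := hconst x0 hx0
    constructor
    · intro i j hij
      simp only [dif_pos hcx] at hij
      exact ((Rf e x0).orderEmbOfFin hcx).injective hij
    · have h1 : {y : ℝ | (e.map (Polynomial.evalRingHom x0)).eval y = 0}
          = ↑(Rf e x0) := rootSet_eq e (hlc x0 hx0)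
      rw [h1, ← Finset.range_orderEmbOfFin (Rf e x0) hcx]
      funext i
      simp only [dif_pos hcx]
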